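/- arXiv:0907.4599 — 2 statements merged into one kernel-verified Lean document; each statement's English description precedes it below -/
import Mathlib

section
/- Fix τ' < τ, set S' = Ψ_F(S(τ')), choose t_n ∈ I(p_n/q_n), and define Φ_n = (1/q_n)∑_{k=0}^{q_n−1}(F^{∘k} − kθ) and Φ̂_n = (1/q_n)∑_{k=0}^{q_n−1}(F_{t_n}^{∘k} − k·p_n/q_n). Then there is a constant C > 0 such that for all n large enough and all z ∈ S', |Φ̂_n(z) − Φ_n(z)| ≤ C·(q_n−1)/(2q_n²); in particular sup_{S'}|Φ̂_n − Φ_n| = O(1/q_n). -/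
open Filter Real Set Topology

/-- The open horizontal strip `S(τ) = {z ∈ ℂ : |Im z| < τ}`. -/
def Strip (τ : ℝ) : Set ℂ := {z : ℂ | |z.im| < τ}

lemma strip_mono {a b : ℝ} (h : a ≤ b) : Strip a ⊆ Strip b :=
  fun _ hz => lt_of_lt_of_le hz h

lemma strip_open (a : ℝ) : IsOpen (Strip a) :=
  isOpen_lt (continuous_abs.comp Complex.continuous_im) continuous_const

lemma strip_convex (a : ℝ) : Convex ℝ (Strip a) := by
  have : Strip a = Complex.imLm ⁻¹' (Set.Ioo (-a) a) := by
    ext z; simp [Strip, abs_lt, Complex.imLm]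
  rw [this]
  exact (convex_Ioo _ _).linear_preimage _

lemma strip_add {a : ℝ} {z : ℂ} (h : z ∈ Strip a) (w : ℂ) (hw : w.im = 0) :
    z + w ∈ Strip a := by
  simpa [Strip, Complex.add_im, hw] using h

lemma sum_range_id_real (q : ℕ) :
    ∑ k ∈ Finset.range q, (k : ℝ) = q * (q - 1) / 2 := by
  induction q with
  | zero => simp
  | succ n ih =>
    rw [Finset.sum_range_succ, ih]
    push_cast
    ring

def Box (a : ℝ) : Set ℂ :=
  (fun p : ℝ × ℝ => (p.1 : ℂ) + p.2 * Complex.I) '' (Set.Icc 0 1 ×ˢ Set.Icc (-a) a)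

lemma box_compact (a : ℝ) : IsCompact (Box a) :=
  ((isCompact_Icc.prod isCompact_Icc).image (by continuity))

lemma box_subset_strip {a b : ℝ} (h : a < b) : Box a ⊆ Strip b := by
  rintro z ⟨⟨x, y⟩, ⟨-, hy⟩, rfl⟩
  have him : ((x : ℂ) + y * Complex.I).im = y := by simp
  simp only [Strip, mem_setOf_eq, him]
  exact lt_of_le_of_lt (abs_le.2 ⟨hy.1, hy.2⟩) h

lemma mem_box {a : ℝ} {z : ℂ} (hre : z.re ∈ Set.Icc (0:ℝ) 1) (him : |z.im| ≤ a) :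
    z ∈ Box a :=
  ⟨⟨z.re, z.im⟩, ⟨hre, abs_le.1 him⟩, by simp [Complex.re_add_im]⟩

theorem core
    (θ τ : ℝ) (hτ : 0 < τ)
    (Ψ : ℂ → ℂ)
    (hΨdiff : DifferentiableOn ℂ Ψ (Strip τ))
    (hΨnonconst : ∃ x ∈ Strip τ, ∃ y ∈ Strip τ, Ψ x ≠ Ψ y)
    (hΨper : ∀ z ∈ Strip τ, Ψ (z + 1) = Ψ z + 1)
    (Fc : ℂ → ℂ)
    (hFcdiff : DifferentiableOn ℂ Fc (Ψ '' Strip τ))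
    (hFclin : ∀ z ∈ Strip τ, Fc (Ψ z) = Ψ (z + (θ : ℂ)))
    (τ' : ℝ) (hτ'pos : 0 < τ') (hτ'τ : τ' < τ) :
    ∃ M ρ : ℝ, 1 ≤ M ∧ 0 < ρ ∧
      ∀ (tt : ℝ) (q : ℕ), ((q : ℝ) * M ^ 2 + 1) * |tt| ≤ ρ →
        ∀ ζ ∈ Strip τ', ∀ k, k ≤ q →
          ‖(fun w : ℂ => Fc w + (tt : ℂ))^[k] (Ψ ζ) - Fc^[k] (Ψ ζ)‖
            ≤ (k : ℝ) * M * |tt| := by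
  -- intermediate strip
  set τ₁ : ℝ := (τ' + τ) / 2 with hτ₁def
  have hτ'τ₁ : τ' < τ₁ := by rw [hτ₁def]; linarith
  have hτ₁τ : τ₁ < τ := by rw [hτ₁def]; linarith
  have hS'S₁ : Strip τ' ⊆ Strip τ₁ := strip_mono hτ'τ₁.le
  have hS₁S : Strip τ₁ ⊆ Strip τ := strip_mono hτ₁τ.le
  have hS'S : Strip τ' ⊆ Strip τ := hS'S₁.trans hS₁S
  -- B: iterate conjugacy
  have hiter : ∀ ζ ∈ Strip τ, ∀ m : ℕ, Fc^[m] (Ψ ζ) = Ψ (ζ + (m : ℂ) * (θ : ℂ)) := by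
    intro ζ hζ m
    induction m with
    | zero => simp
    | succ m ih =>
      rw [Function.iterate_succ_apply', ih,
        hFclin _ (strip_add hζ _ (by simp))]
      push_cast
      ring_nf
  -- C: integer periodicity of Ψ
  have hΨnat : ∀ ζ ∈ Strip τ, ∀ m : ℕ, Ψ (ζ + (m : ℂ)) = Ψ ζ + (m : ℂ) := by
    intro ζ hζ m
    induction m with
    | zero => simp
    | succ m ih =>
      have h1 : Ψ (ζ + (m : ℂ) + 1) = Ψ (ζ + (m : ℂ)) + 1 :=
        hΨper _ (strip_add hζ _ (by simp))
      push_cast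
      rw [← add_assoc, h1, ih]
      ring
  have hΨint : ∀ ζ ∈ Strip τ, ∀ k : ℤ, Ψ (ζ + (k : ℂ)) = Ψ ζ + (k : ℂ) := by
    intro ζ hζ k
    rcases Int.eq_nat_or_neg k with ⟨m, rfl | rfl⟩
    · exact_mod_cast hΨnat ζ hζ m
    · have hζ' : ζ - (m : ℂ) ∈ Strip τ := by
        have h := strip_add hζ (-(m : ℂ)) (by simp)
        rwa [← sub_eq_add_neg] at h
      have := hΨnat _ hζ' m
      simp only [sub_add_cancel] at this
      push_cast
      rw [show ζ + -(m : ℂ) = ζ - (m : ℂ) by ring, this]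
      ring
  -- D: uniform bound for Ψ - id on Strip τ₁
  obtain ⟨A₀, hA₀pos, hA₀⟩ :
      ∃ A₀ : ℝ, 0 ≤ A₀ ∧ ∀ ζ ∈ Strip τ₁, ‖Ψ ζ - ζ‖ ≤ A₀ := by
    obtain ⟨B, hB⟩ := (box_compact τ₁).exists_bound_of_continuousOn
      ((hΨdiff.continuousOn.mono (box_subset_strip hτ₁τ)).sub continuousOn_id)
    refine ⟨max B 0, le_max_right _ _, ?_⟩
    intro ζ hζ
    set k : ℤ := ⌊ζ.re⌋ with hk
    have hζ' : ζ - (k : ℂ) ∈ Box τ₁ := by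
      refine mem_box ?_ ?_
      · have h1 := Int.floor_le ζ.re
        have h2 := (Int.lt_floor_add_one ζ.re).le
        constructor
        · simp only [Complex.sub_re, Complex.intCast_re]
          rw [← hk] at h1
          linarith
        · simp only [Complex.sub_re, Complex.intCast_re]
          rw [← hk] at h2
          linarith
      · simpa [Complex.sub_im] using hζ.le
    have hζ'S : ζ - (k : ℂ) ∈ Strip τ := by
      have : ζ - (k : ℂ) ∈ Strip τ₁ := by
        simpa [Strip, Complex.sub_im] using hζ
      exact hS₁S this
    have hper : Ψ ζ = Ψ (ζ - (k : ℂ)) + (k : ℂ) := by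
      have h := hΨint _ hζ'S k
      rw [sub_add_cancel] at h
      exact h
    have : Ψ ζ - ζ = Ψ (ζ - (k : ℂ)) - (ζ - (k : ℂ)) := by
      rw [hper]; ring
    rw [this]
    exact le_max_of_le_left (hB _ hζ')
  -- E: uniform deviation bound for iterates on U₁
  have hdev : ∀ w ∈ Ψ '' Strip τ₁, ∀ m : ℕ,
      ‖Fc^[m] w - w - (m : ℂ) * (θ : ℂ)‖ ≤ 2 * A₀ := by
    rintro w ⟨ζ, hζ, rfl⟩ m
    have hζS : ζ ∈ Strip τ := hS₁S hζ
    have hζ' : ζ + (m : ℂ) * (θ : ℂ) ∈ Strip τ₁ := strip_add hζ _ (by simp)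
    rw [hiter _ hζS m]
    have : Ψ (ζ + (m : ℂ) * (θ : ℂ)) - Ψ ζ - (m : ℂ) * (θ : ℂ)
        = (Ψ (ζ + (m : ℂ) * (θ : ℂ)) - (ζ + (m : ℂ) * (θ : ℂ))) - (Ψ ζ - ζ) := by
      ring
    rw [this]
    calc ‖_ - _‖ ≤ ‖Ψ (ζ + (m : ℂ) * (θ : ℂ)) - (ζ + (m : ℂ) * (θ : ℂ))‖ + ‖Ψ ζ - ζ‖ :=
          norm_sub_le _ _
      _ ≤ A₀ + A₀ := add_le_add (hA₀ _ hζ') (hA₀ _ hζ)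
      _ = 2 * A₀ := by ring
  -- F: openness of the images
  have himgopen : ∀ s ⊆ Strip τ, IsOpen s → IsOpen (Ψ '' s) := by
    have hanal : AnalyticOnNhd ℂ Ψ (Strip τ) := hΨdiff.analyticOnNhd (strip_open τ)
    rcases hanal.is_constant_or_isOpen (strip_convex τ).isPreconnected with h | h
    · exfalso
      obtain ⟨w, hw⟩ := h
      obtain ⟨x, hx, y, hy, hxy⟩ := hΨnonconst
      exact hxy ((hw x hx).trans (hw y hy).symm)
    · exact h
  have hUopen : IsOpen (Ψ '' Strip τ) :=
    himgopen _ (subset_refl _) (strip_open τ)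
  have hU₁open : IsOpen (Ψ '' Strip τ₁) := himgopen _ hS₁S (strip_open τ₁)
  -- G: a uniform radius around `Ψ '' Strip τ'` inside `Ψ '' Strip τ₁`
  obtain ⟨ρ, hρpos, hρ⟩ :
      ∃ ρ : ℝ, 0 < ρ ∧ ∀ u ∈ Ψ '' Strip τ', Metric.closedBall u (2 * ρ) ⊆ Ψ '' Strip τ₁ := by
    have hK'c : IsCompact (Ψ '' Box τ') :=
      (box_compact τ').image_of_continuousOn
        (hΨdiff.continuousOn.mono (box_subset_strip (hτ'τ₁.trans hτ₁τ)))
    have hK'sub : Ψ '' Box τ' ⊆ Ψ '' Strip τ₁ :=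
      Set.image_mono ((box_subset_strip hτ'τ₁))
    obtain ⟨δ, hδpos, hδ⟩ := hK'c.exists_cthickening_subset_open hU₁open hK'sub
    refine ⟨δ / 2, by positivity, ?_⟩
    rintro u ⟨ζ, hζ, rfl⟩ v hv
    set k : ℤ := ⌊ζ.re⌋ with hk
    have hζ' : ζ - (k : ℂ) ∈ Box τ' := by
      refine mem_box ?_ ?_
      · have h1 := Int.floor_le ζ.re
        have h2 := (Int.lt_floor_add_one ζ.re).le
        constructor
        · simp only [Complex.sub_re, Complex.intCast_re]
          rw [← hk] at h1
          linarith
        · simp only [Complex.sub_re, Complex.intCast_re]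
          rw [← hk] at h2
          linarith
      · simpa [Complex.sub_im] using hζ.le
    have hζ'S : ζ - (k : ℂ) ∈ Strip τ := by
      have : ζ - (k : ℂ) ∈ Strip τ' := by
        simpa [Strip, Complex.sub_im] using hζ
      exact hS'S this
    have hper : Ψ ζ = Ψ (ζ - (k : ℂ)) + (k : ℂ) := by
      have h := hΨint _ hζ'S k
      rw [sub_add_cancel] at h
      exact h
    have hvk : v - (k : ℂ) ∈ Metric.closedBall (Ψ (ζ - (k : ℂ))) δ := by
      rw [Metric.mem_closedBall] at hv ⊢
      rw [hper] at hv
      calc dist (v - (k : ℂ)) (Ψ (ζ - (k : ℂ)))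
          = dist v (Ψ (ζ - (k : ℂ)) + (k : ℂ)) := by
            rw [dist_eq_norm, dist_eq_norm]; ring_nf
        _ ≤ 2 * (δ / 2) := hv
        _ = δ := by ring
    have hvk' : v - (k : ℂ) ∈ Ψ '' Strip τ₁ := by
      apply hδ
      exact (Metric.closedBall_subset_cthickening (Set.mem_image_of_mem _ hζ') δ) hvk
    obtain ⟨η, hη, hηv⟩ := hvk'
    refine ⟨η + (k : ℂ), strip_add hη _ (by simp), ?_⟩
    rw [hΨint _ (hS₁S hη) k, hηv]
    ring
  -- H: differentiability of iterates and a uniform derivative bound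
  have hmapsU : ∀ m : ℕ, Set.MapsTo (Fc^[m]) (Ψ '' Strip τ) (Ψ '' Strip τ) := by
    intro m
    rintro w ⟨ζ, hζ, rfl⟩
    rw [hiter _ hζ m]
    exact Set.mem_image_of_mem _ (strip_add hζ _ (by simp))
  have hiterdiff : ∀ m : ℕ, DifferentiableOn ℂ (Fc^[m]) (Ψ '' Strip τ) := by
    intro m
    induction m with
    | zero => simpa using differentiableOn_id
    | succ m ih =>
      rw [Function.iterate_succ']
      exact hFcdiff.comp ih (hmapsU m)
  set M : ℝ := 1 + (4 * A₀ + 1) / ρ with hM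
  have hMone : 1 ≤ M := by
    rw [hM]
    have : 0 ≤ (4 * A₀ + 1) / ρ := by positivity
    linarith
  -- points within ρ of Ψ '' Strip τ' have a ball of radius ρ inside Ψ '' Strip τ₁
  have hball : ∀ w u, u ∈ Ψ '' Strip τ' → dist w u ≤ ρ →
      Metric.ball w ρ ⊆ Ψ '' Strip τ₁ := by
    intro w u hu hwu
    intro x hx
    apply hρ u hu
    rw [Metric.mem_closedBall]
    calc dist x u ≤ dist x w + dist w u := dist_triangle _ _ _
      _ ≤ ρ + ρ := add_le_add (le_of_lt (Metric.mem_ball.1 hx)) hwu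
      _ = 2 * ρ := by ring
  have hU₁U : Ψ '' Strip τ₁ ⊆ Ψ '' Strip τ := Set.image_mono hS₁S
  have hderivb : ∀ w u, u ∈ Ψ '' Strip τ' → dist w u ≤ ρ → ∀ m : ℕ,
      ‖deriv (Fc^[m]) w‖ ≤ M := by
    intro w u hu hwu m
    have hballw : Metric.ball w ρ ⊆ Ψ '' Strip τ₁ := hball w u hu hwu
    have hwU₁ : w ∈ Ψ '' Strip τ₁ := hballw (Metric.mem_ball_self hρpos)
    set φ : ℂ → ℂ := fun x => Fc^[m] x - x - (m : ℂ) * (θ : ℂ) with hφ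
    have hφdiff : DifferentiableOn ℂ φ (Metric.ball w ρ) :=
      (((hiterdiff m).mono (hballw.trans hU₁U)).sub differentiableOn_id).sub
        (differentiableOn_const _)
    have hφmaps : Set.MapsTo φ (Metric.ball w ρ) (Metric.ball (φ w) (4 * A₀ + 1)) := by
      intro x hx
      rw [Metric.mem_ball, dist_eq_norm]
      calc ‖φ x - φ w‖ ≤ ‖φ x‖ + ‖φ w‖ := norm_sub_le _ _
        _ ≤ 2 * A₀ + 2 * A₀ := add_le_add (hdev _ (hballw hx) m) (hdev _ hwU₁ m)
        _ < 4 * A₀ + 1 := by linarith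
    have hSch := Complex.norm_deriv_le_div_of_mapsTo_ball hφdiff (hφmaps.mono_right Metric.ball_subset_closedBall) hρpos
    have hwdiff : DifferentiableAt ℂ (Fc^[m]) w :=
      (hiterdiff m).differentiableAt (hUopen.mem_nhds (hU₁U hwU₁))
    have hφderiv : deriv φ w = deriv (Fc^[m]) w - 1 := by
      rw [hφ]
      simp only [deriv_sub_const]
      rw [deriv_fun_sub hwdiff differentiableAt_fun_id, deriv_id'']
    calc ‖deriv (Fc^[m]) w‖ = ‖deriv φ w + 1‖ := by rw [hφderiv]; ring_nf
      _ ≤ ‖deriv φ w‖ + ‖(1 : ℂ)‖ := norm_add_le _ _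
      _ ≤ (4 * A₀ + 1) / ρ + 1 := by
          rw [norm_one]
          exact add_le_add_left hSch 1
      _ = M := by rw [hM]; ring
  -- MVT on closed balls of radius ρ/2 centered in Ψ '' Strip τ'
  have hMVT : ∀ c ∈ Ψ '' Strip τ', ∀ (m : ℕ) (a b : ℂ),
      a ∈ Metric.closedBall c (ρ / 2) → b ∈ Metric.closedBall c (ρ / 2) →
      ‖Fc^[m] b - Fc^[m] a‖ ≤ M * ‖b - a‖ := by
    intro c hc m a b ha hb
    have hsub : Metric.closedBall c (ρ / 2) ⊆ Ψ '' Strip τ₁ := by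
      intro x hx
      have hx' : dist x c ≤ ρ := (Metric.mem_closedBall.1 hx).trans (by linarith)
      exact hball x c hc hx' (Metric.mem_ball_self hρpos)
    exact (convex_closedBall c (ρ / 2)).norm_image_sub_le_of_norm_deriv_le
      (fun x hx => (hiterdiff m).differentiableAt (hUopen.mem_nhds (hU₁U (hsub hx))))
      (fun x hx => hderivb x c hc ((Metric.mem_closedBall.1 hx).trans (by linarith)) m)
      ha hb
  -- I: the main induction
  refine ⟨M, ρ / 2, hMone, by positivity, ?_⟩
  intro tt q hsmall ζ hζ
  have hζτ : ζ ∈ Strip τ := hS'S hζ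
  have hFciter : ∀ j : ℕ, Fc^[j] (Ψ ζ) ∈ Ψ '' Strip τ' := by
    intro j
    rw [hiter _ hζτ j]
    exact Set.mem_image_of_mem _ (strip_add hζ _ (by simp))
  have httnn : (0 : ℝ) ≤ |tt| := abs_nonneg tt
  have hMpos : (0 : ℝ) < M := lt_of_lt_of_le one_pos hMone
  intro k
  induction k using Nat.strong_induction_on with
  | _ k ih =>
    intro hk
    have htel : (fun w : ℂ => Fc w + (tt : ℂ))^[k] (Ψ ζ) - Fc^[k] (Ψ ζ) =
        ∑ j ∈ Finset.range k,
          (Fc^[k - (j + 1)] ((fun w : ℂ => Fc w + (tt : ℂ))^[j + 1] (Ψ ζ))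
            - Fc^[k - j] ((fun w : ℂ => Fc w + (tt : ℂ))^[j] (Ψ ζ))) := by
      rw [Finset.sum_range_sub
        (fun j => Fc^[k - j] ((fun w : ℂ => Fc w + (tt : ℂ))^[j] (Ψ ζ)))]
      simp
    rw [htel]
    have hterm : ∀ j ∈ Finset.range k,
        ‖Fc^[k - (j + 1)] ((fun w : ℂ => Fc w + (tt : ℂ))^[j + 1] (Ψ ζ))
          - Fc^[k - j] ((fun w : ℂ => Fc w + (tt : ℂ))^[j] (Ψ ζ))‖ ≤ M * |tt| := by
      intro j hj
      have hjk : j < k := Finset.mem_range.1 hj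
      have hjq : (j : ℝ) ≤ (q : ℝ) := by exact_mod_cast (le_of_lt (lt_of_lt_of_le hjk hk))
      have hMM : M ≤ M ^ 2 := by nlinarith
      have hq0 : (0 : ℝ) ≤ (q : ℝ) := Nat.cast_nonneg q
      have h1 : (j : ℝ) * M ≤ (q : ℝ) * M ^ 2 :=
        mul_le_mul hjq hMM (le_of_lt hMpos) hq0
      have h2 : (j : ℝ) * M ^ 2 ≤ (q : ℝ) * M ^ 2 :=
        mul_le_mul_of_nonneg_right hjq (by positivity)
      have hqM : ((j : ℝ) * M * |tt|) ≤ ρ / 2 := by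
        calc (j : ℝ) * M * |tt| ≤ (q : ℝ) * M ^ 2 * |tt| :=
              mul_le_mul_of_nonneg_right h1 httnn
          _ ≤ ((q : ℝ) * M ^ 2 + 1) * |tt| :=
              mul_le_mul_of_nonneg_right (by linarith) httnn
          _ ≤ ρ / 2 := hsmall
      have hqM2 : ((j : ℝ) * M ^ 2 * |tt| + |tt|) ≤ ρ / 2 := by
        calc (j : ℝ) * M ^ 2 * |tt| + |tt| = ((j : ℝ) * M ^ 2 + 1) * |tt| := by ring
          _ ≤ ((q : ℝ) * M ^ 2 + 1) * |tt| :=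
              mul_le_mul_of_nonneg_right (by linarith) httnn
          _ ≤ ρ / 2 := hsmall
      -- the induction hypothesis at j
      have hej : ‖(fun w : ℂ => Fc w + (tt : ℂ))^[j] (Ψ ζ) - Fc^[j] (Ψ ζ)‖
          ≤ (j : ℝ) * M * |tt| := ih j hjk (le_of_lt (lt_of_lt_of_le hjk hk))
      -- `a` is close to `c = Fc^[j+1] (Ψ ζ)`
      have hc' : Fc^[j] (Ψ ζ) ∈ Ψ '' Strip τ' := hFciter j
      have hc : Fc^[j + 1] (Ψ ζ) ∈ Ψ '' Strip τ' := hFciter (j + 1)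
      have hsucc : Fc^[j + 1] (Ψ ζ) = Fc^[1] (Fc^[j] (Ψ ζ)) := by
        rw [Function.iterate_one, Function.iterate_succ_apply']
      have hadist : ‖Fc ((fun w : ℂ => Fc w + (tt : ℂ))^[j] (Ψ ζ)) - Fc^[j + 1] (Ψ ζ)‖
          ≤ (j : ℝ) * M ^ 2 * |tt| := by
        have h := hMVT (Fc^[j] (Ψ ζ)) hc' 1 (Fc^[j] (Ψ ζ))
          ((fun w : ℂ => Fc w + (tt : ℂ))^[j] (Ψ ζ))
          (Metric.mem_closedBall_self (by positivity))
          (by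
            rw [Metric.mem_closedBall, dist_eq_norm]
            exact hej.trans hqM)
        rw [Function.iterate_one] at h
        rw [hsucc, Function.iterate_one]
        calc ‖Fc ((fun w : ℂ => Fc w + (tt : ℂ))^[j] (Ψ ζ)) - Fc (Fc^[j] (Ψ ζ))‖
            ≤ M * ‖(fun w : ℂ => Fc w + (tt : ℂ))^[j] (Ψ ζ) - Fc^[j] (Ψ ζ)‖ := h
          _ ≤ M * ((j : ℝ) * M * |tt|) := by
              exact mul_le_mul_of_nonneg_left hej (le_of_lt hMpos)
          _ = (j : ℝ) * M ^ 2 * |tt| := by ring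
      -- rewrite the two iterates
      have hkj : k - j = (k - (j + 1)) + 1 := by omega
      have e1 : Fc^[k - j] ((fun w : ℂ => Fc w + (tt : ℂ))^[j] (Ψ ζ))
          = Fc^[k - (j + 1)] (Fc ((fun w : ℂ => Fc w + (tt : ℂ))^[j] (Ψ ζ))) := by
        rw [hkj, Function.iterate_succ_apply]
      have e2 : (fun w : ℂ => Fc w + (tt : ℂ))^[j + 1] (Ψ ζ)
          = Fc ((fun w : ℂ => Fc w + (tt : ℂ))^[j] (Ψ ζ)) + (tt : ℂ) := by
        rw [Function.iterate_succ_apply']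
      rw [e1, e2]
      -- now apply the MVT around `Fc^[j+1] (Ψ ζ)`
      have hmem_a : Fc ((fun w : ℂ => Fc w + (tt : ℂ))^[j] (Ψ ζ))
          ∈ Metric.closedBall (Fc^[j + 1] (Ψ ζ)) (ρ / 2) := by
        rw [Metric.mem_closedBall, dist_eq_norm]
        refine hadist.trans ?_
        linarith
      have hmem_b : Fc ((fun w : ℂ => Fc w + (tt : ℂ))^[j] (Ψ ζ)) + (tt : ℂ)
          ∈ Metric.closedBall (Fc^[j + 1] (Ψ ζ)) (ρ / 2) := by
        rw [Metric.mem_closedBall, dist_eq_norm]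
        calc ‖Fc ((fun w : ℂ => Fc w + (tt : ℂ))^[j] (Ψ ζ)) + (tt : ℂ)
              - Fc^[j + 1] (Ψ ζ)‖
            ≤ ‖Fc ((fun w : ℂ => Fc w + (tt : ℂ))^[j] (Ψ ζ)) - Fc^[j + 1] (Ψ ζ)‖
              + ‖(tt : ℂ)‖ := by
              rw [show Fc ((fun w : ℂ => Fc w + (tt : ℂ))^[j] (Ψ ζ)) + (tt : ℂ)
                - Fc^[j + 1] (Ψ ζ)
                = (Fc ((fun w : ℂ => Fc w + (tt : ℂ))^[j] (Ψ ζ)) - Fc^[j + 1] (Ψ ζ))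
                  + (tt : ℂ) by ring]
              exact norm_add_le _ _
          _ ≤ (j : ℝ) * M ^ 2 * |tt| + |tt| := by
              refine add_le_add hadist ?_
              rw [Complex.norm_real, Real.norm_eq_abs]
          _ ≤ ρ / 2 := hqM2
      have h := hMVT (Fc^[j + 1] (Ψ ζ)) hc (k - (j + 1))
        (Fc ((fun w : ℂ => Fc w + (tt : ℂ))^[j] (Ψ ζ)))
        (Fc ((fun w : ℂ => Fc w + (tt : ℂ))^[j] (Ψ ζ)) + (tt : ℂ))
        hmem_a hmem_b
      refine h.trans ?_
      have : ‖Fc ((fun w : ℂ => Fc w + (tt : ℂ))^[j] (Ψ ζ)) + (tt : ℂ)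
          - Fc ((fun w : ℂ => Fc w + (tt : ℂ))^[j] (Ψ ζ))‖ = |tt| := by
        rw [show Fc ((fun w : ℂ => Fc w + (tt : ℂ))^[j] (Ψ ζ)) + (tt : ℂ)
          - Fc ((fun w : ℂ => Fc w + (tt : ℂ))^[j] (Ψ ζ)) = (tt : ℂ) by ring,
          Complex.norm_real, Real.norm_eq_abs]
      rw [this]
    calc ‖∑ j ∈ Finset.range k, _‖
        ≤ ∑ j ∈ Finset.range k,
          ‖Fc^[k - (j + 1)] ((fun w : ℂ => Fc w + (tt : ℂ))^[j + 1] (Ψ ζ))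
            - Fc^[k - j] ((fun w : ℂ => Fc w + (tt : ℂ))^[j] (Ψ ζ))‖ :=
          norm_sum_le _ _
      _ ≤ ∑ _j ∈ Finset.range k, M * |tt| := Finset.sum_le_sum hterm
      _ = (k : ℝ) * M * |tt| := by
          rw [Finset.sum_const, Finset.card_range, nsmul_eq_mul]
          ring

/-- The computation in the proof of Lemma 4 of the paper: with
`Φ_n = (1/q_n) ∑_{k<q_n} (F^{∘k} - kθ)` and
`Φ̂_n = (1/q_n) ∑_{k<q_n} (F_{t_n}^{∘k} - k p_n/q_n)`, there is a constant
`C > 0` such that `|Φ̂_n(z) - Φ_n(z)| ≤ C (q_n - 1)/(2 q_n²)` on `S' = Ψ_F(S(τ'))`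
for `n` large; in particular `sup_{S'} |Φ̂_n - Φ_n| = O(1/q_n)`. -/
theorem dist_averaged_linearizers_bigO_inv_qn
    (F : ℝ → ℝ)
    (hFanal : ∀ x : ℝ, AnalyticAt ℝ F x)
    (hFmono : StrictMono F)
    (hFbij : Function.Bijective F)
    (hFderiv : ∀ x : ℝ, 0 < deriv F x)
    (hFper : ∀ x : ℝ, F (x + 1) = F x + 1)
    -- translation numbers of the translated family `F_t = F + t`
    (T : ℝ → ℝ)
    (hT : ∀ t x : ℝ, Tendsto (fun n : ℕ => ((fun y => F y + t)^[n] x - x) / n)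
      atTop (𝓝 (T t)))
    (θ : ℝ) (hθ : T 0 = θ) (hirr : Irrational θ)
    -- Herman strip of modulus `2τ`
    (τ : ℝ) (hτ : 0 < τ)
    (Φ : ℝ → ℝ) (hΦmono : StrictMono Φ)
    (hΦper : ∀ x : ℝ, Φ (x + 1) = Φ x + 1)
    (hΦconj : ∀ x : ℝ, Φ (F x) = Φ x + θ)
    (Ψ : ℂ → ℂ)
    (hΨΦ : ∀ x : ℝ, Ψ ((Φ x : ℝ) : ℂ) = (x : ℂ))
    (hΨdiff : DifferentiableOn ℂ Ψ (Strip τ))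
    (hΨinj : Set.InjOn Ψ (Strip τ))
    (hΨper : ∀ z ∈ Strip τ, Ψ (z + 1) = Ψ z + 1)
    (Fc : ℂ → ℂ)
    (hFcreal : ∀ x : ℝ, Fc (x : ℂ) = ((F x : ℝ) : ℂ))
    (hFcdiff : DifferentiableOn ℂ Fc (Ψ '' Strip τ))
    (hFcper : ∀ z ∈ Ψ '' Strip τ, Fc (z + 1) = Fc z + 1)
    (hFclin : ∀ z ∈ Strip τ, Fc (Ψ z) = Ψ (z + (θ : ℂ)))
    -- `0 < τ' < τ`
    (τ' : ℝ) (hτ'pos : 0 < τ') (hτ'τ : τ' < τ)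
    -- continued fraction convergents `p_n/q_n` of `θ`
    (pn : ℕ → ℤ) (qn : ℕ → ℕ)
    (hqpos : ∀ n, 0 < qn n)
    (hqtend : Tendsto qn atTop atTop)
    (hcop : ∀ n, Nat.Coprime (pn n).natAbs (qn n))
    (hconv : ∀ n, |θ - (pn n : ℝ) / (qn n : ℝ)| ≤ 1 / (qn n : ℝ) ^ 2)
    -- parameters `t_n ∈ I(p_n/q_n)`, with the bound coming from Herman's theorem
    (t : ℕ → ℝ) (ht : ∀ n, T (t n) = (pn n : ℝ) / (qn n : ℝ))
    (C₃ : ℝ) (hC₃ : 0 < C₃)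
    (htbound : ∀ n, |t n| ≤ C₃ * |θ - (pn n : ℝ) / (qn n : ℝ)|)
    -- the averaged maps `Φ_n` and `Φ̂_n`
    (Φn : ℕ → ℂ → ℂ)
    (hΦn : ∀ n z, Φn n z = ((qn n : ℂ))⁻¹ *
      ∑ k ∈ Finset.range (qn n), (Fc^[k] z - (k : ℂ) * (θ : ℂ)))
    (Φhat : ℕ → ℂ → ℂ)
    (hΦhat : ∀ n z, Φhat n z = ((qn n : ℂ))⁻¹ *
      ∑ k ∈ Finset.range (qn n),
        ((fun w : ℂ => Fc w + ((t n : ℝ) : ℂ))^[k] z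
          - (k : ℂ) * (((pn n : ℤ) : ℂ) / ((qn n : ℕ) : ℂ)))) :
    ∃ C : ℝ, 0 < C ∧
      (∃ N : ℕ, ∀ n ≥ N, ∀ z ∈ Ψ '' Strip τ',
        ‖Φhat n z - Φn n z‖ ≤ C * ((qn n : ℝ) - 1) / (2 * (qn n : ℝ) ^ 2)) ∧
      ∃ C' : ℝ, 0 < C' ∧ ∃ N : ℕ, ∀ n ≥ N, ∀ z ∈ Ψ '' Strip τ',
        ‖Φhat n z - Φn n z‖ ≤ C' / (qn n : ℝ) := by
  -- nonconstancy of Ψ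
  have hmemreal : ∀ x : ℝ, ((x : ℂ)) ∈ Strip τ := by
    intro x
    simpa [Strip] using hτ
  have hΨnonconst : ∃ x ∈ Strip τ, ∃ y ∈ Strip τ, Ψ x ≠ Ψ y := by
    refine ⟨((Φ 0 : ℝ) : ℂ), hmemreal _, ((Φ 1 : ℝ) : ℂ), hmemreal _, ?_⟩
    rw [hΨΦ 0, hΨΦ 1]
    norm_num
  obtain ⟨M, ρ, hMone, hρpos, hcore⟩ :=
    core θ τ hτ Ψ hΨdiff hΨnonconst hΨper Fc hFcdiff hFclin τ' hτ'pos hτ'τ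
  have hMpos : (0 : ℝ) < M := lt_of_lt_of_le one_pos hMone
  set C : ℝ := M * C₃ + 1 with hC
  have hCpos : 0 < C := by positivity
  -- choice of N
  obtain ⟨N, hN⟩ : ∃ N : ℕ, ∀ n ≥ N, (qn n : ℝ) ≥ (M ^ 2 + 1) * C₃ / ρ := by
    have := hqtend.eventually_ge_atTop (⌈(M ^ 2 + 1) * C₃ / ρ⌉₊)
    rw [Filter.eventually_atTop] at this
    obtain ⟨N, hN⟩ := this
    exact ⟨N, fun n hn => le_trans (Nat.le_ceil _) (by exact_mod_cast hN n hn)⟩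
  -- the main estimate
  have hmain : ∀ n ≥ N, ∀ z ∈ Ψ '' Strip τ',
      ‖Φhat n z - Φn n z‖ ≤ C * ((qn n : ℝ) - 1) / (2 * (qn n : ℝ) ^ 2) := by
    intro n hn z hz
    obtain ⟨ζ, hζ, rfl⟩ := hz
    set q : ℕ := qn n with hq
    have hq1 : (1 : ℝ) ≤ (q : ℝ) := by exact_mod_cast hqpos n
    have hqR : (0 : ℝ) < (q : ℝ) := by linarith
    have hε : |θ - (pn n : ℝ) / (q : ℝ)| ≤ 1 / (q : ℝ) ^ 2 := hconv n
    have htb : |t n| ≤ C₃ * |θ - (pn n : ℝ) / (q : ℝ)| := htbound n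
    have htb2 : |t n| ≤ C₃ / (q : ℝ) ^ 2 := by
      calc |t n| ≤ C₃ * |θ - (pn n : ℝ) / (q : ℝ)| := htb
        _ ≤ C₃ * (1 / (q : ℝ) ^ 2) := mul_le_mul_of_nonneg_left hε hC₃.le
        _ = C₃ / (q : ℝ) ^ 2 := by ring
    -- smallness
    have hsmall : ((q : ℝ) * M ^ 2 + 1) * |t n| ≤ ρ := by
      have hNq : (q : ℝ) ≥ (M ^ 2 + 1) * C₃ / ρ := hN n hn
      have h1 : ((q : ℝ) * M ^ 2 + 1) ≤ (q : ℝ) * (M ^ 2 + 1) := by nlinarith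
      have h2 : ((q : ℝ) * M ^ 2 + 1) * |t n| ≤ (q : ℝ) * (M ^ 2 + 1) * (C₃ / (q : ℝ) ^ 2) :=
        mul_le_mul h1 htb2 (abs_nonneg _) (by positivity)
      have h3 : (q : ℝ) * (M ^ 2 + 1) * (C₃ / (q : ℝ) ^ 2) = (M ^ 2 + 1) * C₃ / (q : ℝ) := by
        field_simp
      rw [h3] at h2
      refine h2.trans ?_
      rw [div_le_iff₀ hqR]
      have h4 := (div_le_iff₀ hρpos).1 (hN n hn)
      linarith
    -- termwise bound
    have hterm : ∀ k ∈ Finset.range q,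
        ‖((fun w : ℂ => Fc w + ((t n : ℝ) : ℂ))^[k] (Ψ ζ)
            - (k : ℂ) * (((pn n : ℤ) : ℂ) / ((q : ℕ) : ℂ)))
          - (Fc^[k] (Ψ ζ) - (k : ℂ) * (θ : ℂ))‖ ≤ (k : ℝ) * (C / (q : ℝ) ^ 2) := by
      intro k hk
      have hkq : k ≤ q := (Finset.mem_range.1 hk).le
      have hcorek := hcore (t n) q hsmall ζ hζ k hkq
      have hsplit : ((fun w : ℂ => Fc w + ((t n : ℝ) : ℂ))^[k] (Ψ ζ)
            - (k : ℂ) * (((pn n : ℤ) : ℂ) / ((q : ℕ) : ℂ)))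
          - (Fc^[k] (Ψ ζ) - (k : ℂ) * (θ : ℂ))
          = ((fun w : ℂ => Fc w + ((t n : ℝ) : ℂ))^[k] (Ψ ζ) - Fc^[k] (Ψ ζ))
            - (k : ℂ) * ((((pn n : ℤ) : ℂ) / ((q : ℕ) : ℂ)) - (θ : ℂ)) := by ring
      rw [hsplit]
      have hnorm2 : ‖(k : ℂ) * ((((pn n : ℤ) : ℂ) / ((q : ℕ) : ℂ)) - (θ : ℂ))‖
          = (k : ℝ) * |(pn n : ℝ) / (q : ℝ) - θ| := by
        rw [norm_mul]
        congr 1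
        · simp
        · have hcast : (((pn n : ℤ) : ℂ) / ((q : ℕ) : ℂ)) - (θ : ℂ)
              = (((pn n : ℝ) / (q : ℝ) - θ : ℝ) : ℂ) := by push_cast; ring
          rw [hcast, Complex.norm_real, Real.norm_eq_abs]
      have habs : |(pn n : ℝ) / (q : ℝ) - θ| ≤ 1 / (q : ℝ) ^ 2 := by
        rw [abs_sub_comm]
        exact hε
      calc ‖((fun w : ℂ => Fc w + ((t n : ℝ) : ℂ))^[k] (Ψ ζ) - Fc^[k] (Ψ ζ))
            - (k : ℂ) * ((((pn n : ℤ) : ℂ) / ((q : ℕ) : ℂ)) - (θ : ℂ))‖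
          ≤ ‖(fun w : ℂ => Fc w + ((t n : ℝ) : ℂ))^[k] (Ψ ζ) - Fc^[k] (Ψ ζ)‖
            + ‖(k : ℂ) * ((((pn n : ℤ) : ℂ) / ((q : ℕ) : ℂ)) - (θ : ℂ))‖ := norm_sub_le _ _
        _ ≤ (k : ℝ) * M * |t n| + (k : ℝ) * |(pn n : ℝ) / (q : ℝ) - θ| := by
            rw [hnorm2]
            exact add_le_add hcorek le_rfl
        _ ≤ (k : ℝ) * M * (C₃ / (q : ℝ) ^ 2) + (k : ℝ) * (1 / (q : ℝ) ^ 2) := by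
            refine add_le_add ?_ ?_
            · exact mul_le_mul_of_nonneg_left htb2 (by positivity)
            · exact mul_le_mul_of_nonneg_left habs (Nat.cast_nonneg k)
        _ = (k : ℝ) * (C / (q : ℝ) ^ 2) := by rw [hC]; ring
    -- assembling
    rw [hΦhat, hΦn, ← mul_sub, ← Finset.sum_sub_distrib]
    rw [norm_mul, norm_inv]
    have hqnorm : ‖((q : ℕ) : ℂ)‖ = (q : ℝ) := by
      rw [Complex.norm_natCast]
    rw [hqnorm]
    calc ((q : ℝ))⁻¹ * ‖∑ k ∈ Finset.range q,
          (((fun w : ℂ => Fc w + ((t n : ℝ) : ℂ))^[k] (Ψ ζ)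
            - (k : ℂ) * (((pn n : ℤ) : ℂ) / ((q : ℕ) : ℂ)))
           - (Fc^[k] (Ψ ζ) - (k : ℂ) * (θ : ℂ)))‖
        ≤ ((q : ℝ))⁻¹ * ∑ k ∈ Finset.range q, (k : ℝ) * (C / (q : ℝ) ^ 2) := by
          refine mul_le_mul_of_nonneg_left ?_ (by positivity)
          exact (norm_sum_le _ _).trans (Finset.sum_le_sum hterm)
      _ = C * ((q : ℝ) - 1) / (2 * (q : ℝ) ^ 2) := by
          rw [← Finset.sum_mul, sum_range_id_real]
          field_simp
  refine ⟨C, hCpos, ⟨N, hmain⟩, C, hCpos, N, ?_⟩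
  intro n hn z hz
  have h := hmain n hn z hz
  have hq1 : (1 : ℝ) ≤ (qn n : ℝ) := by exact_mod_cast hqpos n
  have hqR : (0 : ℝ) < (qn n : ℝ) := by linarith
  refine h.trans ?_
  rw [div_le_div_iff₀ (by positivity) hqR]
  ring_nf
  nlinarith
end

section
/- Suppose Trans(F) = p/q with p, q coprime, q ≥ 1, and set G = F^{∘q} − Id − p. Then either G has a multiple real zero (some x with G(x) = 0 and G'(x) = 0), or there exist points x, y ∈ ℝ with G(x) = 0, G'(x) > 0 and G(y) = 0, G'(y) < 0. In other words, counting multiplicities, the induced circle diffeomorphism has at least 2 cycles with rotation number p/q. -/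
open Filter Real Set Topology

/-- Auxiliary: a differentiable function with a zero at `a` of positive derivative
and another zero at `c > a` has a zero in `(a, c]` with nonpositive derivative. -/
lemma cross_down_aux (G : ℝ → ℝ) (hGd : Differentiable ℝ G) (a c : ℝ) (hac : a < c)
    (hGa : G a = 0) (hGc : G c = 0) (hda : 0 < deriv G a) :
    ∃ b, a < b ∧ b ≤ c ∧ G b = 0 ∧ deriv G b ≤ 0 := by
  -- Step 1: G is positive on a right neighborhood of a
  have hslope : Tendsto (slope G a) (𝓝[≠] a) (𝓝 (deriv G a)) :=
    hasDerivAt_iff_tendsto_slope.mp (hGd a).hasDerivAt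
  have hslope' : Tendsto (slope G a) (𝓝[>] a) (𝓝 (deriv G a)) :=
    hslope.mono_left (nhdsWithin_mono a (fun x hx => ne_of_gt hx))
  have h1 : ∀ᶠ x in 𝓝[>] a, 0 < G x := by
    filter_upwards [hslope'.eventually (eventually_gt_nhds hda),
      self_mem_nhdsWithin] with x hx hxa
    rw [slope_def_field] at hx
    have hxa' : (0:ℝ) < x - a := sub_pos.mpr hxa
    have : 0 < (G x - G a) / (x - a) := hx
    have := mul_pos this hxa'
    rw [div_mul_cancel₀ _ (ne_of_gt hxa')] at this
    linarith [this, hGa]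
  obtain ⟨u, hu, hIoo'⟩ := mem_nhdsGT_iff_exists_Ioo_subset.mp h1
  have hIoo : ∀ x, a < x → x < u → 0 < G x := fun x h1 h2 => hIoo' ⟨h1, h2⟩
  have hua : a < u := hu
  -- u ≤ c (else G c > 0)
  have huc : u ≤ c := by
    by_contra h
    push_neg at h
    have : 0 < G c := hIoo c hac h
    linarith
  -- Step 2: the set of zeros in [u, c] is closed and nonempty; take its inf
  set S : Set ℝ := {x | x ∈ Icc u c ∧ G x = 0} with hS
  have hSc : IsClosed S := by
    have : S = Icc u c ∩ G ⁻¹' {0} := by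
      ext x; simp [hS, Set.mem_Icc, and_comm]
    rw [this]
    exact isClosed_Icc.inter (isClosed_singleton.preimage hGd.continuous)
  have hSne : S.Nonempty := ⟨c, ⟨huc, le_refl c⟩, hGc⟩
  have hSbdd : BddBelow S := ⟨u, fun x hx => hx.1.1⟩
  set b := sInf S with hb
  have hbS : b ∈ S := hSc.csInf_mem hSne hSbdd
  have hub : u ≤ b := hbS.1.1
  have hbc : b ≤ c := hbS.1.2
  have hab : a < b := lt_of_lt_of_le hua hub
  have hGb : G b = 0 := hbS.2
  -- Step 3: G > 0 on (a, b)
  have hpos : ∀ x, a < x → x < b → 0 < G x := by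
    intro x hax hxb
    by_contra h
    push_neg at h
    -- G x ≠ 0 since x < b = inf S
    have hxne : G x ≠ 0 := by
      intro h0
      have hxu : u ≤ x := by
        by_contra hxu
        push_neg at hxu
        have := hIoo x hax hxu
        linarith
      have : b ≤ x := csInf_le hSbdd ⟨⟨hxu, le_trans (le_of_lt hxb) hbc⟩, h0⟩
      linarith
    have hxneg : G x < 0 := lt_of_le_of_ne h hxne
    -- pick w ∈ (a, min u x) with G w > 0
    set w := (a + min u x) / 2 with hw
    have haw : a < w := by
      have : a < min u x := lt_min hua hax
      simp only [hw]; linarith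
    have hwu : w < u := by
      have h1 : min u x ≤ u := min_le_left _ _
      have : a < min u x := lt_min hua hax
      simp only [hw]; linarith
    have hwx : w < x := by
      have h1 : min u x ≤ x := min_le_right _ _
      have : a < min u x := lt_min hua hax
      simp only [hw]; linarith
    have hGw : 0 < G w := hIoo w haw hwu
    -- IVT on [w, x]
    have : (0:ℝ) ∈ Ioo (G x) (G w) := ⟨hxneg, hGw⟩
    obtain ⟨z, hz, hGz⟩ := intermediate_value_Ioo' (le_of_lt hwx)
      hGd.continuous.continuousOn this
    -- z ∈ Ioo w x, G z = 0, contradiction with b = inf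
    have hzu : u ≤ z := by
      by_contra hzu
      push_neg at hzu
      have := hIoo z (lt_trans haw hz.1) hzu
      linarith
    have : b ≤ z := csInf_le hSbdd ⟨⟨hzu, le_trans (le_of_lt hz.2)
      (le_trans (le_of_lt hxb) hbc)⟩, hGz⟩
    linarith [hz.2, hxb]
  -- Step 4: deriv G b ≤ 0
  have hslopeb : Tendsto (slope G b) (𝓝[<] b) (𝓝 (deriv G b)) :=
    (hasDerivAt_iff_tendsto_slope.mp (hGd b).hasDerivAt).mono_left
      (nhdsWithin_mono b (fun x hx => ne_of_lt hx))
  have hev : ∀ᶠ x in 𝓝[<] b, slope G b x ≤ 0 := by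
    have hIooMem : Ioo a b ∈ 𝓝[<] b := Ioo_mem_nhdsLT_of_mem ⟨hab, le_refl b⟩
    filter_upwards [hIooMem] with x hx
    have hGx : 0 < G x := hpos x hx.1 hx.2
    have hxb : x - b < 0 := sub_neg.mpr hx.2
    rw [slope_def_field, hGb, sub_zero]
    exact le_of_lt (div_neg_of_pos_of_neg hGx hxb)
  exact ⟨b, hab, hbc, hGb, le_of_tendsto hslopeb hev⟩

/-- Mirror of `cross_down_aux`: a zero with negative derivative with a zero to its left
gives a zero with nonnegative derivative. -/
lemma cross_up_aux (G : ℝ → ℝ) (hGd : Differentiable ℝ G) (a c : ℝ) (hca : c < a)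
    (hGa : G a = 0) (hGc : G c = 0) (hda : deriv G a < 0) :
    ∃ b, c ≤ b ∧ b < a ∧ G b = 0 ∧ 0 ≤ deriv G b := by
  set H : ℝ → ℝ := fun x => G (-x) with hH
  have hHd : Differentiable ℝ H := hGd.comp (differentiable_neg)
  have hderiv : ∀ x : ℝ, deriv H x = -deriv G (-x) := deriv_comp_neg G
  obtain ⟨b', hb1, hb2, hb3, hb4⟩ := cross_down_aux H hHd (-a) (-c) (by linarith)
    (by simp [hH, hGa]) (by simp [hH, hGc]) (by rw [hderiv]; simp; linarith)
  refine ⟨-b', by linarith, by linarith, by simpa [hH] using hb3, ?_⟩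
  have := hderiv b'
  rw [this] at hb4
  linarith

/-- If the translation number of `F` is `p/q`, then for `G = F^{∘q} - Id - p`,
either `G` has a multiple real zero, or `G` vanishes at least once with positive
derivative and once with negative derivative.  In other words, counting
multiplicities, the induced circle diffeomorphism has at least two cycles with
rotation number `p/q`. -/
theorem two_cycles_of_rational_translation_number
    (F : ℝ → ℝ)
    (hFanal : ∀ x : ℝ, AnalyticAt ℝ F x)
    (hFmono : StrictMono F)
    (hFbij : Function.Bijective F)
    (hFderiv : ∀ x : ℝ, 0 < deriv F x)
    (hFper : ∀ x : ℝ, F (x + 1) = F x + 1)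
    (p : ℤ) (q : ℕ) (hq : 1 ≤ q) (hcop : Nat.Coprime p.natAbs q)
    -- the translation number of `F` is `p/q`
    (hTrans : ∀ x : ℝ, Tendsto (fun n : ℕ => (F^[n] x - x) / n) atTop
      (𝓝 ((p : ℝ) / (q : ℝ))))
    (G : ℝ → ℝ) (hG : G = fun x => F^[q] x - x - (p : ℝ)) :
    (∃ x : ℝ, G x = 0 ∧ deriv G x = 0) ∨
      (∃ x y : ℝ, G x = 0 ∧ 0 < deriv G x ∧ G y = 0 ∧ deriv G y < 0) := by
  have hFdiff : Differentiable ℝ F := fun x => (hFanal x).differentiableAt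
  -- Build the circle lift
  set f : CircleDeg1Lift := ⟨⟨F, hFmono.monotone⟩, hFper⟩ with hf
  have hcoe : ⇑f = F := rfl
  have hfc : Continuous f := by rw [hcoe]; exact hFdiff.continuous
  -- translation number equals p/q
  have hτ : CircleDeg1Lift.translationNumber f = (p : ℝ) / (q : ℝ) := by
    refine tendsto_nhds_unique ?_ (hTrans 0)
    have := f.tendsto_translationNumber 0
    refine this.congr fun n => ?_
    rw [CircleDeg1Lift.coe_pow, hcoe]
  -- get a point on a periodic orbit
  obtain ⟨a, ha⟩ := (f.translationNumber_eq_rat_iff hfc hq).mp hτ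
  rw [CircleDeg1Lift.coe_pow, hcoe] at ha
  -- basic facts about G
  have hGa : G a = 0 := by rw [hG]; simp [ha]
  have hFqdiff : Differentiable ℝ (F^[q]) := hFdiff.iterate q
  have hGd : Differentiable ℝ G := by
    rw [hG]
    exact (hFqdiff.sub differentiable_id).sub (differentiable_const _)
  -- G is 1-periodic
  have hFqper' : ∀ (n : ℕ) (x : ℝ), F^[n] (x + 1) = F^[n] x + 1 := by
    intro n
    induction n with
    | zero => intro x; simp
    | succ n ih =>
      intro x
      rw [Function.iterate_succ_apply', Function.iterate_succ_apply', ih, hFper]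
  have hFqper : ∀ x : ℝ, F^[q] (x + 1) = F^[q] x + 1 := hFqper' q
  have hGper : ∀ x : ℝ, G (x + 1) = G x := by
    intro x; rw [hG]; simp only [hFqper x]; ring
  have hGa1 : G (a + 1) = 0 := by rw [hGper]; exact hGa
  have hGam1 : G (a - 1) = 0 := by
    have := hGper (a - 1); rw [sub_add_cancel] at this; rw [← this]; exact hGa
  rcases lt_trichotomy (deriv G a) 0 with hlt | heq | hgt
  · -- negative derivative at a : find zero with nonneg derivative to the left
    obtain ⟨b, _, _, hGb, hb4⟩ := cross_up_aux G hGd a (a - 1) (by linarith) hGa hGam1 hlt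
    rcases eq_or_lt_of_le hb4 with h0 | h0
    · exact Or.inl ⟨b, hGb, h0.symm⟩
    · exact Or.inr ⟨b, a, hGb, h0, hGa, hlt⟩
  · exact Or.inl ⟨a, hGa, heq⟩
  · -- positive derivative at a : find zero with nonpos derivative to the right
    obtain ⟨b, _, _, hGb, hb4⟩ := cross_down_aux G hGd a (a + 1) (by linarith) hGa hGa1 hgt
    rcases eq_or_lt_of_le hb4 with h0 | h0
    · exact Or.inl ⟨b, hGb, h0⟩
    · exact Or.inr ⟨a, b, hGa, hgt, hGb, h0⟩
end
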